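/- For every δ ∈ [0,1), every C > 0, every α ∈ (0, 1/2), every β > 0, and every integer k ≥ 1, there exist disjoint finite sets A, B ⊆ [0,1]² with A ∪ B nonempty and ||A| − |B|| < β·|A ∪ B|, such that for every partition of [0,1]² into measurable sets D₁, …, D_k, if (a) for every i, (1−δ)·⌊|A∪B|/k⌋ ≤ |(A∪B) ∩ D_i| ≤ (1+δ)·⌈|A∪B|/k⌉, and (b) for every i there exists P_i ≥ 0 such that vol(cthickening(r, frontier(D_i))) ≤ 2·P_i·r + π·r² for all r > 0 and P_i² ≤ C·vol(D_i), then |A ∩ D_i| > |B ∩ D_i| for every i and the efficiency gap satisfies EG(D₁,…,D_k; A, B) ≤ −(1/2 − α). -/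

import Mathlib

open MeasureTheory Metric Set ENNReal

noncomputable section

/-- The plane `ℝ²` with the Euclidean metric. -/
abbrev Plane := EuclideanSpace ℝ (Fin 2)

/-- The closed unit square `[0,1]² ⊆ ℝ²`. -/
def unitSq : Set Plane := {x | x 0 ∈ Set.Icc (0 : ℝ) 1 ∧ x 1 ∈ Set.Icc (0 : ℝ) 1}

/-- Difference `w_A - w_B` of wasted votes of the two parties `A`, `B` in the district `D`:
the winner wastes its count in excess of `⌈s/2⌉` (where `s` is the total count in `D`),
and the loser wastes its full count. -/
def wasteDiff (A B D : Set Plane) : ℝ :=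
  if (B ∩ D).ncard < (A ∩ D).ncard then
    (((A ∩ D).ncard : ℝ) - ⌈(((A ∩ D).ncard : ℝ) + ((B ∩ D).ncard : ℝ)) / 2⌉)
      - ((B ∩ D).ncard : ℝ)
  else
    ((A ∩ D).ncard : ℝ)
      - (((B ∩ D).ncard : ℝ) - ⌈(((A ∩ D).ncard : ℝ) + ((B ∩ D).ncard : ℝ)) / 2⌉)

/-- The efficiency gap of the districting `D₁, …, D_k` for parties `A`, `B`. -/
def effGap (A B : Set Plane) {k : ℕ} (D : Fin k → Set Plane) : ℝ :=
  (∑ i, wasteDiff A B (D i)) / ((A ∪ B).ncard : ℝ)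

/-- A preconnected set meeting both `t` and its complement meets the frontier of `t`. -/
lemma preconn_inter_frontier {X : Type*} [TopologicalSpace X] {s t : Set X}
    (hs : IsPreconnected s) (h1 : (s ∩ t).Nonempty) (h2 : (s \ t).Nonempty) :
    (s ∩ frontier t).Nonempty := by
  by_contra hemp
  rw [Set.not_nonempty_iff_eq_empty] at hemp
  have hsub : s ⊆ interior t ∪ interior tᶜ := by
    intro x hx
    have hxf : x ∉ frontier t := fun hf => by
      have : x ∈ s ∩ frontier t := ⟨hx, hf⟩
      simp [hemp] at this
    by_cases hxc : x ∈ closure t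
    · left
      rcases (closure_eq_interior_union_frontier t ▸ hxc) with h | h
      · exact h
      · exact absurd h hxf
    · right
      rw [interior_compl]
      exact hxc
  have hu : (s ∩ interior t).Nonempty := by
    obtain ⟨x, hxs, hxt⟩ := h1
    rcases hsub hxs with h | h
    · exact ⟨x, hxs, h⟩
    · rw [interior_compl] at h
      exact absurd (subset_closure hxt) h
  have hv : (s ∩ interior tᶜ).Nonempty := by
    obtain ⟨x, hxs, hxt⟩ := h2
    rcases hsub hxs with h | h
    · exact absurd (interior_subset h) hxt
    · exact ⟨x, hxs, h⟩
  obtain ⟨x, _, hx⟩ := hs (interior t) (interior tᶜ) isOpen_interior isOpen_interior hsub hu hv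
  rw [interior_compl] at hx
  exact (hx.2 (subset_closure (interior_subset hx.1)))

/-- crossing: if `x ∈ t`, `y ∉ t` then some frontier point is within `dist x y` of `x`. -/
lemma exists_frontier_dist_le {x y : Plane} {t : Set Plane} (hx : x ∈ t) (hy : y ∉ t) :
    ∃ z ∈ frontier t, dist x z ≤ dist x y := by
  have hseg : IsPreconnected (segment ℝ x y) := (convex_segment x y).isPreconnected
  obtain ⟨z, hzs, hzf⟩ := preconn_inter_frontier hseg ⟨x, left_mem_segment ℝ x y, hx⟩
    ⟨y, right_mem_segment ℝ x y, hy⟩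
  refine ⟨z, hzf, ?_⟩
  have : segment ℝ x y ⊆ closedBall x (dist x y) :=
    (convex_closedBall x (dist x y)).segment_subset (mem_closedBall_self dist_nonneg)
      (by simp [mem_closedBall, dist_comm])
  simpa [mem_closedBall, dist_comm] using this hzs

def mk2 (a b : ℝ) : Plane := (WithLp.equiv 2 (Fin 2 → ℝ)).symm ![a, b]

@[simp] lemma mk2_apply0 (a b : ℝ) : mk2 a b 0 = a := rfl
@[simp] lemma mk2_apply1 (a b : ℝ) : mk2 a b 1 = b := rfl

lemma dist_mk2 (a b c d : ℝ) :
    dist (mk2 a b) (mk2 c d) = Real.sqrt ((a - c)^2 + (b - d)^2) := by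
  rw [EuclideanSpace.dist_eq]
  congr 1
  rw [Fin.sum_univ_two]
  simp [Real.dist_eq, sq_abs]

lemma dist_mk2_same (a c y : ℝ) : dist (mk2 a y) (mk2 c y) = |a - c| := by
  rw [dist_mk2]
  simp [Real.sqrt_sq_eq_abs]

lemma abs_sub_coord_le_dist (x y : Plane) (i : Fin 2) : |x i - y i| ≤ dist x y := by
  rw [EuclideanSpace.dist_eq]
  rw [← Real.sqrt_sq_eq_abs]
  apply Real.sqrt_le_sqrt
  have h : dist (x i) (y i) ^ 2 = (x i - y i)^2 := by rw [Real.dist_eq, sq_abs]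
  rw [← h]
  exact Finset.single_le_sum (f := fun j => dist (x j) (y j) ^ 2)
    (fun j _ => sq_nonneg _) (Finset.mem_univ i)

lemma plane_volume_ball (x : Plane) (r : ℝ) (hr : 0 ≤ r) :
    volume (ball x r) = ENNReal.ofReal (Real.pi * r ^ 2) := by
  rw [EuclideanSpace.volume_ball]
  simp only [Fintype.card_fin]
  have hg : Real.Gamma ((2:ℕ) / 2 + 1) = 1 := by
    norm_num [Real.Gamma_two]
  rw [hg]
  rw [Real.sq_sqrt Real.pi_nonneg]
  rw [← ENNReal.ofReal_pow hr, ← ENNReal.ofReal_mul (by positivity)]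
  ring_nf

lemma volume_unitSq : volume unitSq = 1 := by
  have : unitSq = (MeasurableEquiv.toLp 2 (Fin 2 → ℝ)).symm ⁻¹'
      (Set.univ.pi fun _ : Fin 2 => Set.Icc (0:ℝ) 1) := by
    ext x
    simp only [unitSq, Set.mem_preimage, Set.mem_pi, Set.mem_univ, forall_true_left,
      Set.mem_setOf_eq]
    constructor
    · rintro ⟨h0, h1⟩ i
      fin_cases i <;> assumption
    · intro h
      exact ⟨h 0, h 1⟩
  rw [this, (EuclideanSpace.volume_preserving_symm_measurableEquiv_toLp (Fin 2)).measure_preimage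
    (MeasurableSet.univ_pi fun _ => measurableSet_Icc).nullMeasurableSet]
  rw [volume_pi_pi]
  simp [Real.volume_Icc]

lemma mk2_inj {a b c d : ℝ} (h : mk2 a b = mk2 c d) : a = c ∧ b = d :=
  ⟨congrArg (fun p : Plane => p 0) h, congrArg (fun p : Plane => p 1) h⟩

def epsQ (q M : ℕ) : ℝ := 1 / (16 * (q+1) * M)

def gpt (q M : ℕ) (u v j : ℕ) : Plane :=
  mk2 (((u:ℝ) + 1/2)/M + j * epsQ q M) (((v:ℝ) + 1/2)/M)

lemma nat_add_lt_one_inj {a b : ℕ} {r s : ℝ} (hr0 : 0 ≤ r) (hr1 : r < 1)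
    (hs0 : 0 ≤ s) (hs1 : s < 1) (h : (a:ℝ) + r = (b:ℝ) + s) : a = b := by
  rcases lt_trichotomy a b with hab | hab | hab
  · have : (a:ℝ) + 1 ≤ b := by exact_mod_cast Nat.succ_le_of_lt hab
    linarith
  · exact hab
  · have : (b:ℝ) + 1 ≤ a := by exact_mod_cast Nat.succ_le_of_lt hab
    linarith

lemma epsQ_pos {q M : ℕ} (hM : 1 ≤ M) : 0 < epsQ q M := by
  have : (0:ℝ) < M := by exact_mod_cast hM
  have : (0:ℝ) < 16 * ((q:ℝ)+1) * M := by positivity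
  exact div_pos one_pos this

lemma epsQ_le {q M : ℕ} (hM : 1 ≤ M) {j : ℕ} (hj : j ≤ 2*q) :
    (j:ℝ) * epsQ q M ≤ 1 / (8 * M) := by
  have hM' : (1:ℝ) ≤ M := by exact_mod_cast hM
  have hj' : (j:ℝ) ≤ 2*q := by exact_mod_cast hj
  have hq0 : (0:ℝ) ≤ q := Nat.cast_nonneg q
  have hMR : (0:ℝ) < M := by linarith
  rw [epsQ, mul_one_div, div_le_div_iff₀ (by positivity) (by positivity)]
  nlinarith

lemma gpt_inj {q M : ℕ} (hM : 1 ≤ M) {u v j u' v' j' : ℕ}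
    (hu : u < M) (hu' : u' < M) (hj : j ≤ 2*q) (hj' : j' ≤ 2*q)
    (h : gpt q M u v j = gpt q M u' v' j') : u = u' ∧ v = v' ∧ j = j' := by
  have hMR : (0:ℝ) < M := by exact_mod_cast hM
  obtain ⟨h1, h2⟩ := mk2_inj h
  have hv : v = v' := by
    field_simp at h2
    exact_mod_cast (by linarith : (v:ℝ) = v')
  have key : (u:ℝ) + ((1:ℝ)/2 + (j:ℝ) * epsQ q M * M) = (u':ℝ) + (1/2 + (j':ℝ) * epsQ q M * M) := by
    field_simp at h1
    nlinarith [h1]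
  have hbound : ∀ i : ℕ, i ≤ 2*q → (0:ℝ) ≤ 1/2 + (i:ℝ) * epsQ q M * M ∧ 1/2 + (i:ℝ) * epsQ q M * M < 1 := by
    intro i hi
    have h0 : (0:ℝ) ≤ (i:ℝ) * epsQ q M := mul_nonneg (Nat.cast_nonneg i) (le_of_lt (epsQ_pos hM))
    have hle : (i:ℝ) * epsQ q M ≤ 1/(8*M) := epsQ_le hM hi
    constructor
    · nlinarith
    · have h8 : (i:ℝ) * epsQ q M * M ≤ 1/(8*M) * M := by nlinarith
      have h9 : (1:ℝ)/(8*M) * M = 1/8 := by field_simp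
      linarith
  obtain ⟨hr0, hr1⟩ := hbound j hj
  obtain ⟨hs0, hs1⟩ := hbound j' hj'
  have hu : u = u' := nat_add_lt_one_inj hr0 hr1 hs0 hs1 key
  refine ⟨hu, hv, ?_⟩
  subst hu
  have : (j:ℝ) * (epsQ q M * M) = (j':ℝ) * (epsQ q M * M) := by
    push_cast at key
    nlinarith [key]
  have hne : epsQ q M * M ≠ 0 := by
    have := epsQ_pos (q := q) hM
    positivity
  exact Nat.cast_injective (mul_right_cancel₀ hne this)

open scoped Classical

lemma gpt_mem_unitSq {q M : ℕ} (hM : 1 ≤ M) {u v j : ℕ}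
    (hu : u < M) (hv : v < M) (hj : j ≤ 2*q) : gpt q M u v j ∈ unitSq := by
  have hMR : (0:ℝ) < M := by exact_mod_cast hM
  have hj1 : (0:ℝ) ≤ (j:ℝ) * epsQ q M :=
    mul_nonneg (Nat.cast_nonneg j) (le_of_lt (epsQ_pos hM))
  have hj2 : (j:ℝ) * epsQ q M ≤ 1/(8*M) := epsQ_le hM hj
  have huR : (u:ℝ) ≤ M - 1 := by
    have : (u:ℝ) + 1 ≤ M := by exact_mod_cast hu
    linarith
  have hvR : (v:ℝ) ≤ M - 1 := by
    have : (v:ℝ) + 1 ≤ M := by exact_mod_cast hv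
    linarith
  have hu0 : (0:ℝ) ≤ u := Nat.cast_nonneg u
  have hv0 : (0:ℝ) ≤ v := Nat.cast_nonneg v
  constructor
  · simp only [gpt, mk2_apply0, Set.mem_Icc]
    constructor
    · positivity
    · rw [div_add' _ _ _ (ne_of_gt hMR), div_le_one hMR]
      have : (1:ℝ)/(8*M) * M ≤ 1/8 := by rw [div_mul_eq_mul_div]; rw [div_le_div_iff₀ (by positivity) (by norm_num)]; nlinarith
      nlinarith
  · simp only [gpt, mk2_apply1, Set.mem_Icc]
    constructor
    · positivity
    · rw [div_le_one hMR]; linarith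

lemma gpt_dist_same_site {q M : ℕ} (hM : 1 ≤ M) {u v j j' : ℕ}
    (hj : j ≤ 2*q) (hj' : j' ≤ 2*q) :
    dist (gpt q M u v j) (gpt q M u v j') ≤ 1/(8*M) := by
  rw [gpt, gpt, dist_mk2_same]
  have h1 : (0:ℝ) ≤ (j:ℝ) * epsQ q M :=
    mul_nonneg (Nat.cast_nonneg j) (le_of_lt (epsQ_pos hM))
  have h2 : (j:ℝ) * epsQ q M ≤ 1/(8*M) := epsQ_le hM hj
  have h3 : (0:ℝ) ≤ (j':ℝ) * epsQ q M :=
    mul_nonneg (Nat.cast_nonneg j') (le_of_lt (epsQ_pos hM))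
  have h4 : (j':ℝ) * epsQ q M ≤ 1/(8*M) := epsQ_le hM hj'
  rw [abs_le]
  constructor <;> [skip; skip] <;> · push_cast; nlinarith

lemma gpt_base_dist {q M : ℕ} (hM : 1 ≤ M) {u v u' v' : ℕ}
    (hne : (u, v) ≠ (u', v')) :
    1/(M:ℝ) ≤ dist (gpt q M u v 0) (gpt q M u' v' 0) := by
  have hMR : (0:ℝ) < M := by exact_mod_cast hM
  have key : ∀ a b : ℕ, a ≠ b → 1/(M:ℝ) ≤ |((a:ℝ) + 1/2)/M - ((b:ℝ)+1/2)/M| := by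
    intro a b hab
    have : ((a:ℝ) + 1/2)/M - ((b:ℝ)+1/2)/M = ((a:ℝ) - b)/M := by ring
    rw [this, abs_div, abs_of_pos hMR, div_le_div_iff₀ hMR hMR]
    have : (1:ℝ) ≤ |(a:ℝ) - b| := by
      rcases Nat.lt_or_ge a b with h | h
      · have : (a:ℝ) + 1 ≤ b := by exact_mod_cast h
        rw [abs_sub_comm, abs_of_nonneg (by linarith)]; linarith
      · have hab' : b < a := lt_of_le_of_ne h (Ne.symm hab)
        have : (b:ℝ) + 1 ≤ a := by exact_mod_cast hab'
        rw [abs_of_nonneg (by linarith)]; linarith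
    nlinarith
  by_cases huu : u = u'
  · have hvv : v ≠ v' := by
      intro hvv; exact hne (by rw [huu, hvv])
    calc 1/(M:ℝ) ≤ |((v:ℝ) + 1/2)/M - ((v':ℝ)+1/2)/M| := key v v' hvv
    _ = |gpt q M u v 0 1 - gpt q M u' v' 0 1| := by simp [gpt]
    _ ≤ _ := abs_sub_coord_le_dist _ _ 1
  · calc 1/(M:ℝ) ≤ |((u:ℝ) + 1/2)/M - ((u':ℝ)+1/2)/M| := key u u' huu
    _ = |gpt q M u v 0 0 - gpt q M u' v' 0 0| := by simp [gpt]
    _ ≤ _ := abs_sub_coord_le_dist _ _ 0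

def fA (q M : ℕ) : (Fin M × Fin M) × Fin (q+1) → Plane :=
  fun t => gpt q M t.1.1 t.1.2 t.2
def fB (q M : ℕ) : (Fin M × Fin M) × Fin q → Plane :=
  fun t => gpt q M t.1.1 t.1.2 (q+1+t.2)

lemma fA_inj {q M : ℕ} (hM : 1 ≤ M) : Function.Injective (fA q M) := by
  rintro ⟨⟨u, v⟩, j⟩ ⟨⟨u', v'⟩, j'⟩ h
  obtain ⟨h1, h2, h3⟩ := gpt_inj hM u.isLt u'.isLt
    (le_trans (Nat.le_of_lt_succ j.isLt) (by omega))
    (le_trans (Nat.le_of_lt_succ j'.isLt) (by omega)) h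
  simp only [Prod.mk.injEq]
  exact ⟨⟨Fin.val_injective h1, Fin.val_injective h2⟩, Fin.val_injective h3⟩

lemma fB_inj {q M : ℕ} (hM : 1 ≤ M) : Function.Injective (fB q M) := by
  rintro ⟨⟨u, v⟩, j⟩ ⟨⟨u', v'⟩, j'⟩ h
  obtain ⟨h1, h2, h3⟩ := gpt_inj hM u.isLt u'.isLt
    (by have := j.isLt; omega) (by have := j'.isLt; omega) h
  have h3' : q + 1 + (j:ℕ) = q + 1 + (j':ℕ) := h3
  simp only [Prod.mk.injEq]
  refine ⟨⟨Fin.val_injective h1, Fin.val_injective h2⟩, Fin.val_injective (by omega)⟩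

lemma fAB_disjoint {q M : ℕ} (hM : 1 ≤ M) :
    Disjoint (Set.range (fA q M)) (Set.range (fB q M)) := by
  rw [Set.disjoint_left]
  rintro x ⟨⟨⟨u, v⟩, j⟩, rfl⟩ ⟨⟨⟨u', v'⟩, j'⟩, hx⟩
  obtain ⟨_, _, h3⟩ := gpt_inj hM u'.isLt u.isLt
    (by have := j'.isLt; omega) (le_trans (Nat.le_of_lt_succ j.isLt) (by omega)) hx
  have h3' : q + 1 + (j':ℕ) = (j:ℕ) := h3
  have hj := j.isLt
  omega

/-- number of A-voters of the cluster at site `s` that lie in `S` -/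
def nA (q M : ℕ) (S : Set Plane) (s : Fin M × Fin M) : ℕ :=
  (Finset.univ.filter fun j : Fin (q+1) => gpt q M s.1 s.2 j ∈ S).card

def nB (q M : ℕ) (S : Set Plane) (s : Fin M × Fin M) : ℕ :=
  (Finset.univ.filter fun j : Fin q => gpt q M s.1 s.2 (q+1+j) ∈ S).card

lemma countA {q M : ℕ} (hM : 1 ≤ M) (S : Set Plane) :
    (Set.range (fA q M) ∩ S).ncard = ∑ s : Fin M × Fin M, nA q M S s := by
  have h1 : Set.range (fA q M) ∩ S = fA q M '' (fA q M ⁻¹' S) := by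
    rw [Set.image_preimage_eq_inter_range, Set.inter_comm]
  rw [h1, Set.ncard_image_of_injective _ (fA_inj hM)]
  have h2 : fA q M ⁻¹' S = {t | fA q M t ∈ S} := rfl
  rw [h2, Set.ncard_eq_toFinset_card', Set.toFinset_setOf]
  rw [Finset.card_filter, Fintype.sum_prod_type]
  unfold nA
  congr 1; ext s
  rw [Finset.card_filter]
  rfl

lemma countB {q M : ℕ} (hM : 1 ≤ M) (S : Set Plane) :
    (Set.range (fB q M) ∩ S).ncard = ∑ s : Fin M × Fin M, nB q M S s := by
  have h1 : Set.range (fB q M) ∩ S = fB q M '' (fB q M ⁻¹' S) := by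
    rw [Set.image_preimage_eq_inter_range, Set.inter_comm]
  rw [h1, Set.ncard_image_of_injective _ (fB_inj hM)]
  have h2 : fB q M ⁻¹' S = {t | fB q M t ∈ S} := rfl
  rw [h2, Set.ncard_eq_toFinset_card', Set.toFinset_setOf]
  rw [Finset.card_filter, Fintype.sum_prod_type]
  unfold nB
  congr 1; ext s
  rw [Finset.card_filter]
  rfl

def Meets (q M : ℕ) (D : Set Plane) (s : Fin M × Fin M) : Prop :=
  ∃ j, j ≤ 2*q ∧ gpt q M s.1 s.2 j ∈ D

def Whole (q M : ℕ) (D : Set Plane) (s : Fin M × Fin M) : Prop :=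
  ∀ j, j ≤ 2*q → gpt q M s.1 s.2 j ∈ D

lemma nA_le (q M : ℕ) (S : Set Plane) (s : Fin M × Fin M) : nA q M S s ≤ q+1 := by
  calc nA q M S s ≤ Finset.univ.card := Finset.card_filter_le _ _
  _ = q+1 := by simp

lemma nB_le (q M : ℕ) (S : Set Plane) (s : Fin M × Fin M) : nB q M S s ≤ q := by
  calc nB q M S s ≤ Finset.univ.card := Finset.card_filter_le _ _
  _ = q := by simp

lemma nA_of_whole {q M : ℕ} {D : Set Plane} {s : Fin M × Fin M}
    (h : Whole q M D s) : nA q M D s = q+1 := by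
  unfold nA
  have he : ∀ j ∈ (Finset.univ : Finset (Fin (q+1))), gpt q M s.1 s.2 (j:ℕ) ∈ D :=
    fun j _ => h j (by have := j.isLt; omega)
  rw [Finset.filter_true_of_mem he]
  simp

lemma nB_of_whole {q M : ℕ} {D : Set Plane} {s : Fin M × Fin M}
    (h : Whole q M D s) : nB q M D s = q := by
  unfold nB
  have he : ∀ j ∈ (Finset.univ : Finset (Fin q)), gpt q M s.1 s.2 (q+1+(j:ℕ)) ∈ D :=
    fun j _ => h _ (by have := j.isLt; omega)
  rw [Finset.filter_true_of_mem he]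
  simp

lemma nA_of_not_meets {q M : ℕ} {D : Set Plane} {s : Fin M × Fin M}
    (h : ¬ Meets q M D s) : nA q M D s = 0 := by
  unfold nA
  rw [Finset.card_eq_zero, Finset.filter_eq_empty_iff]
  intro j _ hj
  exact h ⟨j, by have := j.isLt; omega, hj⟩

lemma nB_of_not_meets {q M : ℕ} {D : Set Plane} {s : Fin M × Fin M}
    (h : ¬ Meets q M D s) : nB q M D s = 0 := by
  unfold nB
  rw [Finset.card_eq_zero, Finset.filter_eq_empty_iff]
  intro j _ hj
  exact h ⟨q+1+j, by have := j.isLt; omega, hj⟩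

lemma split_ball_subset {q M : ℕ} (hM : 1 ≤ M) {D : Set Plane} {s : Fin M × Fin M}
    (hmeets : Meets q M D s) (hnw : ¬ Whole q M D s) :
    ball (gpt q M s.1 s.2 0) (1/(4*(M:ℝ))) ⊆ cthickening (1/(2*(M:ℝ))) (frontier D) := by
  have hMR : (0:ℝ) < M := by exact_mod_cast hM
  obtain ⟨j₁, hj₁, hmem⟩ := hmeets
  unfold Whole at hnw
  push_neg at hnw
  obtain ⟨j₂, hj₂, hnmem⟩ := hnw
  obtain ⟨z, hz, hdz⟩ := exists_frontier_dist_le hmem hnmem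
  have h1 : dist (gpt q M s.1 s.2 j₁) (gpt q M s.1 s.2 j₂) ≤ 1/(8*M) :=
    gpt_dist_same_site hM hj₁ hj₂
  have h2 : dist (gpt q M s.1 s.2 0) z ≤ 1/(4*M) := by
    calc dist (gpt q M s.1 s.2 0) z
        ≤ dist (gpt q M s.1 s.2 0) (gpt q M s.1 s.2 j₁) + dist (gpt q M s.1 s.2 j₁) z :=
          dist_triangle _ _ _
      _ ≤ 1/(8*M) + 1/(8*M) := by
          have := gpt_dist_same_site (u := s.1) (v := s.2) hM (Nat.zero_le _) hj₁
          linarith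
      _ = 1/(4*M) := by ring
  intro w hw
  rw [mem_ball] at hw
  refine mem_cthickening_of_dist_le w z _ _ hz ?_
  calc dist w z ≤ dist w (gpt q M s.1 s.2 0) + dist (gpt q M s.1 s.2 0) z := dist_triangle _ _ _
    _ ≤ 1/(4*M) + 1/(4*M) := by linarith [le_of_lt hw]
    _ = 1/(2*M) := by ring

lemma isClosed_unitSq : IsClosed unitSq := by
  have : unitSq = ((fun x : Plane => x 0) ⁻¹' Set.Icc 0 1) ∩ ((fun x : Plane => x 1) ⁻¹' Set.Icc 0 1) := rfl
  rw [this]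
  exact ((isClosed_Icc (a := (0:ℝ)) (b := 1)).preimage (by fun_prop : Continuous fun x : Plane => x 0)).inter
    ((isClosed_Icc (a := (0:ℝ)) (b := 1)).preimage (by fun_prop : Continuous fun x : Plane => x 1))

lemma isBounded_unitSq : Bornology.IsBounded unitSq := by
  apply Bornology.IsBounded.subset (Metric.isBounded_closedBall (x := mk2 0 0) (r := 2))
  intro x hx
  rw [mem_closedBall]
  have h0 : |x 0 - mk2 0 0 0| ≤ 1 := by
    simp only [mk2_apply0, sub_zero]
    rw [abs_le]; exact ⟨by linarith [hx.1.1], hx.1.2⟩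
  have h1 : |x 1 - mk2 0 0 1| ≤ 1 := by
    simp only [mk2_apply1, sub_zero]
    rw [abs_le]; exact ⟨by linarith [hx.2.1], hx.2.2⟩
  rw [EuclideanSpace.dist_eq]
  rw [show ((2:ℝ)) = Real.sqrt 4 by rw [show (4:ℝ) = 2^2 by norm_num, Real.sqrt_sq (by norm_num)]]
  apply Real.sqrt_le_sqrt
  rw [Fin.sum_univ_two]
  have e0 : dist (x 0) (mk2 0 0 0) ^ 2 ≤ 1 := by
    rw [Real.dist_eq]; nlinarith [abs_nonneg (x 0 - mk2 0 0 0)]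
  have e1 : dist (x 1) (mk2 0 0 1) ^ 2 ≤ 1 := by
    rw [Real.dist_eq]; nlinarith [abs_nonneg (x 1 - mk2 0 0 1)]
  linarith

/-- Geometric bound: the number of split sites is at most `6 P M + 4`. -/
lemma split_count_bound {q M : ℕ} (hM : 1 ≤ M) {D : Set Plane} (hD : D ⊆ unitSq)
    {P : ℝ} (hP : 0 ≤ P)
    (htube : ∀ r : ℝ, 0 < r →
      (volume (cthickening r (frontier D))).toReal ≤ 2*P*r + Real.pi*r^2) :
    ((Finset.univ.filter fun s : Fin M × Fin M =>
        Meets q M D s ∧ ¬ Whole q M D s).card : ℝ) ≤ 6*P*M + 4 := by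
  classical
  have hMR : (0:ℝ) < M := by exact_mod_cast hM
  set SF := Finset.univ.filter fun s : Fin M × Fin M => Meets q M D s ∧ ¬ Whole q M D s with hSF
  set ρ : ℝ := 1/(4*(M:ℝ)) with hρ
  have hρpos : 0 < ρ := by positivity
  set T := cthickening (1/(2*(M:ℝ))) (frontier D) with hT
  -- balls are disjoint
  have hdisj : (SF : Set (Fin M × Fin M)).PairwiseDisjoint
      (fun s => ball (gpt q M s.1 s.2 0) ρ) := by
    intro s _ s' _ hss
    apply ball_disjoint_ball
    calc ρ + ρ = 1/(2*(M:ℝ)) := by rw [hρ]; ring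
    _ ≤ 1/(M:ℝ) := by
        rw [div_le_div_iff₀ (by positivity) hMR]; nlinarith
    _ ≤ dist (gpt q M s.1 s.2 0) (gpt q M s'.1 s'.2 0) := gpt_base_dist hM (by
        intro hc
        have h1 : (s.1:ℕ) = (s'.1:ℕ) := congrArg Prod.fst hc
        have h2 : (s.2:ℕ) = (s'.2:ℕ) := congrArg Prod.snd hc
        exact hss (Prod.ext (Fin.val_injective h1) (Fin.val_injective h2)))
  -- sum of ball volumes
  have hsum : volume (⋃ s ∈ SF, ball (gpt q M s.1 s.2 0) ρ)
      = SF.card * ENNReal.ofReal (Real.pi * ρ^2) := by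
    rw [measure_biUnion_finset hdisj (fun s _ => measurableSet_ball)]
    rw [Finset.sum_congr rfl (fun s _ => plane_volume_ball _ ρ (le_of_lt hρpos))]
    rw [Finset.sum_const, nsmul_eq_mul]
  have hsub : (⋃ s ∈ SF, ball (gpt q M s.1 s.2 0) ρ) ⊆ T := by
    apply Set.iUnion₂_subset
    intro s hs
    rw [hSF, Finset.mem_filter] at hs
    exact split_ball_subset hM hs.2.1 hs.2.2
  have hTfin : volume T < ⊤ := by
    apply Bornology.IsBounded.measure_lt_top
    apply Bornology.IsBounded.cthickening
    exact (isBounded_unitSq.subset (Set.Subset.trans (frontier_subset_closure.trans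
      (closure_mono hD)) isClosed_unitSq.closure_subset))
  have hle : (SF.card : ℝ≥0∞) * ENNReal.ofReal (Real.pi * ρ^2) ≤ volume T := by
    rw [← hsum]
    exact measure_mono hsub
  have hreal : (SF.card : ℝ) * (Real.pi * ρ^2) ≤ 2*P*(1/(2*(M:ℝ))) + Real.pi*(1/(2*(M:ℝ)))^2 := by
    have h1 := htube (1/(2*(M:ℝ))) (by positivity)
    have h2 : ((SF.card : ℝ≥0∞) * ENNReal.ofReal (Real.pi * ρ^2)).toReal
        ≤ (volume T).toReal := by
      apply ENNReal.toReal_mono (ne_of_lt hTfin) hle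
    rw [ENNReal.toReal_mul, ENNReal.toReal_natCast,
      ENNReal.toReal_ofReal (by positivity)] at h2
    exact le_trans h2 h1
  -- arithmetic
  have hpi := Real.pi_gt_three
  rw [hρ] at hreal
  have h16 : (0:ℝ) < 16*(M:ℝ)^2 := by positivity
  have hcard : (0:ℝ) ≤ (SF.card : ℝ) := Nat.cast_nonneg _
  have hMne : (M:ℝ) ≠ 0 := ne_of_gt hMR
  have e1 : (SF.card:ℝ) * (Real.pi * (1/(4*(M:ℝ)))^2) = SF.card * Real.pi / (16*(M:ℝ)^2) := by
    ring
  have e2 : 2*P*(1/(2*(M:ℝ))) + Real.pi*(1/(2*(M:ℝ)))^2 = (16*P*M + 4*Real.pi)/(16*(M:ℝ)^2) := by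
    field_simp
    ring
  rw [e1, e2, div_le_div_iff₀ h16 h16] at hreal
  have hclean : (SF.card:ℝ) * Real.pi ≤ 16*P*M + 4*Real.pi :=
    le_of_mul_le_mul_right hreal h16
  nlinarith [hclean, mul_nonneg (mul_nonneg hP (le_of_lt hMR))
    (by linarith : (0:ℝ) ≤ Real.pi - 3), Real.pi_pos]

lemma nA_univ (q M : ℕ) (s : Fin M × Fin M) : nA q M Set.univ s = q+1 := by
  simp [nA]

lemma nB_univ (q M : ℕ) (s : Fin M × Fin M) : nB q M Set.univ s = q := by
  simp [nB]

lemma cardA {q M : ℕ} (hM : 1 ≤ M) : (Set.range (fA q M)).ncard = M*M*(q+1) := by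
  have h := countA (q := q) (M := M) hM Set.univ
  rw [Set.inter_univ] at h
  rw [h, Finset.sum_congr rfl (fun s _ => nA_univ q M s), Finset.sum_const,
    Finset.card_univ, Fintype.card_prod, Fintype.card_fin, smul_eq_mul, Nat.mul_assoc]

lemma cardB {q M : ℕ} (hM : 1 ≤ M) : (Set.range (fB q M)).ncard = M*M*q := by
  have h := countB (q := q) (M := M) hM Set.univ
  rw [Set.inter_univ] at h
  rw [h, Finset.sum_congr rfl (fun s _ => nB_univ q M s), Finset.sum_const,
    Finset.card_univ, Fintype.card_prod, Fintype.card_fin, smul_eq_mul, Nat.mul_assoc]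

lemma sum_ite_unique_district {k : ℕ} {D : Fin k → Set Plane}
    (hdisj : Pairwise fun i j => Disjoint (D i) (D j))
    (hcover : (⋃ i, D i) = unitSq) {x : Plane} (hx : x ∈ unitSq) :
    (∑ i : Fin k, if x ∈ D i then 1 else 0) = 1 := by
  rw [← hcover] at hx
  obtain ⟨i₀, hi₀⟩ := Set.mem_iUnion.mp hx
  rw [← Finset.card_filter]
  have : Finset.univ.filter (fun i => x ∈ D i) = {i₀} := by
    ext i
    simp only [Finset.mem_filter, Finset.mem_univ, true_and, Finset.mem_singleton]
    constructor
    · intro hxi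
      by_contra hne
      exact Set.disjoint_left.mp (hdisj hne) hxi hi₀
    · rintro rfl; exact hi₀
  rw [this]
  simp

lemma sum_nA_districts {q M k : ℕ} (hM : 1 ≤ M) {D : Fin k → Set Plane}
    (hdisj : Pairwise fun i j => Disjoint (D i) (D j))
    (hcover : (⋃ i, D i) = unitSq) (s : Fin M × Fin M) :
    ∑ i : Fin k, nA q M (D i) s = q+1 := by
  unfold nA
  simp_rw [Finset.card_filter]
  rw [Finset.sum_comm]
  have : ∀ j : Fin (q+1),
      (∑ i : Fin k, if gpt q M s.1 s.2 (j:ℕ) ∈ D i then 1 else 0) = 1 := by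
    intro j
    exact sum_ite_unique_district hdisj hcover
      (gpt_mem_unitSq hM s.1.isLt s.2.isLt (by have := j.isLt; omega))
  rw [Finset.sum_congr rfl (fun j _ => this j)]
  simp

lemma sum_nB_districts {q M k : ℕ} (hM : 1 ≤ M) {D : Fin k → Set Plane}
    (hdisj : Pairwise fun i j => Disjoint (D i) (D j))
    (hcover : (⋃ i, D i) = unitSq) (s : Fin M × Fin M) :
    ∑ i : Fin k, nB q M (D i) s = q := by
  unfold nB
  simp_rw [Finset.card_filter]
  rw [Finset.sum_comm]
  have : ∀ j : Fin q,
      (∑ i : Fin k, if gpt q M s.1 s.2 (q+1+(j:ℕ)) ∈ D i then 1 else 0) = 1 := by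
    intro j
    exact sum_ite_unique_district hdisj hcover
      (gpt_mem_unitSq hM s.1.isLt s.2.isLt (by have := j.isLt; omega))
  rw [Finset.sum_congr rfl (fun j _ => this j)]
  simp
lemma M_ineq (δ sC : ℝ) (hδ0 : 0 ≤ δ) (hδ1 : δ < 1) (hsC : 0 ≤ sC)
    (q k M : ℕ) (hk : 1 ≤ k) (hM1 : 1 ≤ M)
    (hMgt : (k:ℝ)/(1-δ) * ((2*q+1) * ((q+1)*(6*sC + 4) + 1) + 1) + 1 < M) :
    (2*(q:ℝ)+1) * (((q:ℝ)+1)*(6*sC*M + 4) + 1) ≤ (1-δ) * ((2*q+1)*((M:ℝ)*M)/k - 1) := by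
  have hkR : (0:ℝ) < k := by exact_mod_cast hk
  have hMR : (1:ℝ) ≤ M := by exact_mod_cast hM1
  have h1δ : (0:ℝ) < 1 - δ := by linarith
  have hq0 : (0:ℝ) ≤ q := Nat.cast_nonneg q
  set G : ℝ := (2*(q:ℝ)+1) * (((q:ℝ)+1)*(6*sC + 4) + 1) with hG
  have hGpos : 0 ≤ G := by positivity
  have h1 : (k:ℝ)*(G+1) < (1-δ)*((M:ℝ) - 1) := by
    have h2 : (k:ℝ)/(1-δ)*(G+1) < M - 1 := by linarith
    have h3 : (k:ℝ)*(G+1) = (1-δ)*((k:ℝ)/(1-δ)*(G+1)) := by field_simp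
    rw [h3]
    exact mul_lt_mul_of_pos_left h2 h1δ
  have hRew : (1-δ) * ((2*(q:ℝ)+1)*((M:ℝ)*M)/k - 1) = ((1-δ) * ((2*(q:ℝ)+1)*((M:ℝ)*M) - k))/k := by
    field_simp
  rw [hRew, le_div_iff₀ hkR]
  have hstep1 : (2*(q:ℝ)+1) * (((q:ℝ)+1)*(6*sC*M + 4) + 1) ≤ M * G := by
    rw [hG]
    nlinarith [mul_nonneg (mul_nonneg hq0 hsC) (sub_nonneg.mpr hMR)]
  have hstep2 : (M:ℝ) * G * k ≤ (1-δ) * ((2*(q:ℝ)+1)*((M:ℝ)*M) - k) := by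
    nlinarith [mul_lt_mul_of_pos_left h1 (lt_of_lt_of_le zero_lt_one hMR),
      mul_nonneg (mul_nonneg (le_of_lt h1δ) hq0) (mul_nonneg (le_trans zero_le_one hMR) (le_trans zero_le_one hMR))]
  calc (2*(q:ℝ)+1) * (((q:ℝ)+1)*(6*sC*M + 4) + 1) * k ≤ M * G * k := by
        apply mul_le_mul_of_nonneg_right hstep1 (le_of_lt hkR)
    _ ≤ _ := hstep2

/-- **Impossibility theorem (Theorem 1 of the paper).**
For all parameters `δ ∈ [0,1)`, `C > 0`, `α ∈ (0,1/2)`, `β > 0` and `k ≥ 1` there exist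
disjoint finite sets of voters `A, B ⊆ [0,1]²` with nearly balanced counts
(`||A| - |B|| < β|A ∪ B|`) such that any measurable partition of `[0,1]²` into districts
`D₁, …, D_k` satisfying the one-person-one-vote condition with parameter `δ` and the
Polsby–Popper compactness condition (a Minkowski-type tube bound defining the perimeter
`P i` of each district, with `P i ^ 2 ≤ C · vol (D i)`) is swept by `A`, and its efficiency
gap is at most `-(1/2 - α)`. -/
theorem impossibility_minkowski (δ C α β : ℝ) (hδ0 : 0 ≤ δ) (hδ1 : δ < 1) (hC : 0 < C)
    (hα0 : 0 < α) (hα : α < 1 / 2) (hβ : 0 < β) (k : ℕ) (hk : 1 ≤ k) :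
    ∃ A B : Set Plane, A.Finite ∧ B.Finite ∧ Disjoint A B ∧ A ⊆ unitSq ∧ B ⊆ unitSq ∧
      (A ∪ B).Nonempty ∧ |(A.ncard : ℝ) - (B.ncard : ℝ)| < β * ((A ∪ B).ncard : ℝ) ∧
      ∀ D : Fin k → Set Plane,
        (∀ i, MeasurableSet (D i)) →
        (Pairwise fun i j => Disjoint (D i) (D j)) →
        (⋃ i, D i) = unitSq →
        (∀ i, (1 - δ) * (⌊((A ∪ B).ncard : ℝ) / (k : ℝ)⌋ : ℝ)
                ≤ (((A ∪ B) ∩ D i).ncard : ℝ) ∧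
              (((A ∪ B) ∩ D i).ncard : ℝ)
                ≤ (1 + δ) * (⌈((A ∪ B).ncard : ℝ) / (k : ℝ)⌉ : ℝ)) →
        (∀ i, ∃ P : ℝ, 0 ≤ P ∧
            (∀ r : ℝ, 0 < r →
              (volume (Metric.cthickening r (frontier (D i)))).toReal
                ≤ 2 * P * r + Real.pi * r ^ 2) ∧
            P ^ 2 ≤ C * (volume (D i)).toReal) →
        (∀ i, (B ∩ D i).ncard < (A ∩ D i).ncard) ∧
        effGap A B D ≤ -(1 / 2 - α) := by
  classical
  have hkR : (0:ℝ) < k := by exact_mod_cast hk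
  have h1δ : (0:ℝ) < 1 - δ := by linarith
  -- choose q
  obtain ⟨q, hq⟩ := exists_nat_gt (1/α + 1/β)
  have hβinv : 0 < 1/β := by positivity
  have hαinv : 0 < 1/α := by positivity
  have hqα : 1/α < q := by linarith
  have hqβ : 1/β < q := by linarith
  have hqR : (0:ℝ) < q := lt_trans hαinv hqα
  have hαq : 1 < α * (2*(q:ℝ)+1) := by
    have h1 : 1 < (q:ℝ) * α := (div_lt_iff₀ hα0).mp hqα
    nlinarith
  have hβq : 1 < β * (2*(q:ℝ)+1) := by
    have h1 : 1 < (q:ℝ) * β := (div_lt_iff₀ hβ).mp hqβ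
    nlinarith
  -- choose M
  obtain ⟨M, hMgt⟩ := exists_nat_gt
    ((k:ℝ)/(1-δ) * ((2*q+1) * ((q+1)*(6*Real.sqrt C + 4) + 1) + 1) + 1)
  have hsC : (0:ℝ) ≤ Real.sqrt C := Real.sqrt_nonneg C
  have hM : 1 ≤ M := by
    have hpos : (0:ℝ) <
        (k:ℝ)/(1-δ) * ((2*q+1) * ((q+1)*(6*Real.sqrt C + 4) + 1) + 1) + 1 := by positivity
    have : (0:ℝ) < M := lt_trans hpos hMgt
    exact_mod_cast Nat.one_le_iff_ne_zero.mpr (by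
      intro h
      rw [h] at this
      simp at this)
  have hMR : (1:ℝ) ≤ M := by exact_mod_cast hM
  have hMpos : (0:ℝ) < M := by linarith
  set A := Set.range (fA q M) with hA
  set B := Set.range (fB q M) with hB
  have hAfin : A.Finite := Set.finite_range _
  have hBfin : B.Finite := Set.finite_range _
  have hABdisj : Disjoint A B := fAB_disjoint hM
  have hAsub : A ⊆ unitSq := by
    rw [hA]
    rintro x ⟨⟨⟨u, v⟩, j⟩, rfl⟩
    exact gpt_mem_unitSq hM u.isLt v.isLt (by have := j.isLt; omega)
  have hBsub : B ⊆ unitSq := by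
    rw [hB]
    rintro x ⟨⟨⟨u, v⟩, j⟩, rfl⟩
    exact gpt_mem_unitSq hM u.isLt v.isLt (by have := j.isLt; omega)
  have hcardA : A.ncard = M*M*(q+1) := by rw [hA]; exact cardA hM
  have hcardB : B.ncard = M*M*q := by rw [hB]; exact cardB hM
  have hcardU : (A ∪ B).ncard = M*M*(2*q+1) := by
    rw [Set.ncard_union_eq hABdisj hAfin hBfin, hcardA, hcardB]
    ring
  refine ⟨A, B, hAfin, hBfin, hABdisj, hAsub, hBsub, ?_, ?_, ?_⟩
  · -- nonempty
    refine ⟨fA q M ⟨⟨⟨0, hM⟩, ⟨0, hM⟩⟩, ⟨0, Nat.succ_pos q⟩⟩, Or.inl ?_⟩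
    rw [hA]
    exact Set.mem_range_self _
  · -- balance
    rw [hcardA, hcardB, hcardU]
    push_cast
    rw [show ((M:ℝ)*M*((q:ℝ)+1) - (M:ℝ)*M*q) = (M:ℝ)*M by ring,
      abs_of_pos (by positivity)]
    nlinarith [mul_pos hMpos hMpos]
  · -- districts
    intro D hmeas hdisjD hcover hcount htube
    have sweep : ∀ i, (B ∩ D i).ncard < (A ∩ D i).ncard := by
      intro i
      obtain ⟨P, hP0, htub, hPC⟩ := htube i
      have hDsub : D i ⊆ unitSq := by rw [← hcover]; exact Set.subset_iUnion D i
      have hvol : (volume (D i)).toReal ≤ 1 := by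
        have h1 : volume (D i) ≤ 1 := by rw [← volume_unitSq]; exact measure_mono hDsub
        calc (volume (D i)).toReal ≤ (1:ℝ≥0∞).toReal := ENNReal.toReal_mono (by simp) h1
          _ = 1 := by simp
      have hPle : P ≤ Real.sqrt C := by
        have h2 : P^2 ≤ C := by nlinarith [hPC, hvol, hC, ENNReal.toReal_nonneg (a := volume (D i))]
        calc P = Real.sqrt (P^2) := (Real.sqrt_sq hP0).symm
          _ ≤ _ := Real.sqrt_le_sqrt h2
      set WF := Finset.univ.filter (fun s : Fin M × Fin M => Whole q M (D i) s) with hWFdef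
      set SF := Finset.univ.filter
        (fun s : Fin M × Fin M => Meets q M (D i) s ∧ ¬ Whole q M (D i) s) with hSFdef
      have hS : (SF.card : ℝ) ≤ 6*Real.sqrt C*M + 4 := by
        have h1 := split_count_bound (q := q) hM hDsub hP0 htub
        have h2 : 6*P*(M:ℝ) + 4 ≤ 6*Real.sqrt C*M + 4 := by
          have h3 := mul_le_mul_of_nonneg_right hPle (le_of_lt hMpos)
          linarith
        exact le_trans h1 h2
      have key1 : (WF.card : ℝ) - q*SF.card ≤
          (∑ s : Fin M × Fin M, (nA q M (D i) s : ℝ))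
            - ∑ s : Fin M × Fin M, (nB q M (D i) s : ℝ) := by
        have hpt : ∀ s ∈ (Finset.univ : Finset (Fin M × Fin M)),
            ((if Whole q M (D i) s then (1:ℝ) else 0)
              - q*(if Meets q M (D i) s ∧ ¬ Whole q M (D i) s then (1:ℝ) else 0))
            ≤ (nA q M (D i) s : ℝ) - nB q M (D i) s := by
          intro s _
          by_cases hw : Whole q M (D i) s
          · rw [if_pos hw, if_neg (fun hc => hc.2 hw), nA_of_whole hw, nB_of_whole hw]
            push_cast
            norm_num
          · by_cases hm : Meets q M (D i) s
            · rw [if_neg hw, if_pos ⟨hm, hw⟩]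
              have h1 : (nB q M (D i) s : ℝ) ≤ q := by exact_mod_cast nB_le q M (D i) s
              have h2 : (0:ℝ) ≤ (nA q M (D i) s : ℝ) := Nat.cast_nonneg _
              linarith
            · rw [if_neg hw, if_neg (fun hc => hm hc.1),
                nA_of_not_meets hm, nB_of_not_meets hm]
              norm_num
        have hsum := Finset.sum_le_sum hpt
        rw [Finset.sum_sub_distrib, ← Finset.mul_sum, Finset.sum_boole, Finset.sum_boole,
          Finset.sum_sub_distrib] at hsum
        exact hsum
      have key2 : (∑ s : Fin M × Fin M, (nA q M (D i) s : ℝ))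
            + (∑ s : Fin M × Fin M, (nB q M (D i) s : ℝ))
          ≤ (2*(q:ℝ)+1) * ((WF.card : ℝ) + SF.card) := by
        have hpt : ∀ s ∈ (Finset.univ : Finset (Fin M × Fin M)),
            (nA q M (D i) s : ℝ) + nB q M (D i) s
              ≤ (2*(q:ℝ)+1) * (if Meets q M (D i) s then (1:ℝ) else 0) := by
          intro s _
          by_cases hm : Meets q M (D i) s
          · rw [if_pos hm, mul_one]
            have h1 : (nA q M (D i) s : ℝ) ≤ q+1 := by exact_mod_cast nA_le q M (D i) s
            have h2 : (nB q M (D i) s : ℝ) ≤ q := by exact_mod_cast nB_le q M (D i) s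
            linarith
          · rw [if_neg hm, mul_zero, nA_of_not_meets hm, nB_of_not_meets hm]
            norm_num
        have hsum := Finset.sum_le_sum hpt
        rw [← Finset.mul_sum, Finset.sum_boole] at hsum
        rw [Finset.sum_add_distrib] at hsum
        have hcsub : (Finset.univ.filter fun s : Fin M × Fin M => Meets q M (D i) s).card
            ≤ WF.card + SF.card := by
          have hsub : (Finset.univ.filter fun s : Fin M × Fin M => Meets q M (D i) s)
              ⊆ WF ∪ SF := by
            intro s hs
            rw [Finset.mem_filter] at hs
            rw [Finset.mem_union, hWFdef, hSFdef, Finset.mem_filter, Finset.mem_filter]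
            by_cases hw : Whole q M (D i) s
            · exact Or.inl ⟨Finset.mem_univ _, hw⟩
            · exact Or.inr ⟨Finset.mem_univ _, hs.2, hw⟩
          exact le_trans (Finset.card_le_card hsub) (Finset.card_union_le _ _)
        have hcsubR : ((Finset.univ.filter fun s : Fin M × Fin M =>
            Meets q M (D i) s).card : ℝ) ≤ (WF.card : ℝ) + SF.card := by exact_mod_cast hcsub
        calc (∑ s : Fin M × Fin M, (nA q M (D i) s : ℝ))
              + (∑ s : Fin M × Fin M, (nB q M (D i) s : ℝ)) ≤ _ := hsum
          _ ≤ (2*(q:ℝ)+1) * ((WF.card : ℝ) + SF.card) := by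
              apply mul_le_mul_of_nonneg_left hcsubR (by positivity)
      -- count from hypothesis
      have hcnt : (((A ∪ B) ∩ D i).ncard : ℝ)
          = (∑ s : Fin M × Fin M, (nA q M (D i) s : ℝ))
            + ∑ s : Fin M × Fin M, (nB q M (D i) s : ℝ) := by
        rw [Set.union_inter_distrib_right,
          Set.ncard_union_eq (hABdisj.mono Set.inter_subset_left Set.inter_subset_left)
            (hAfin.inter_of_left _) (hBfin.inter_of_left _), hA, hB,
          countA hM (D i), countB hM (D i)]
        push_cast
        ring
      have hlow := (hcount i).1
      rw [hcardU] at hlow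
      have hfloor : ((M:ℝ)*M*(2*(q:ℝ)+1))/k - 1 ≤ (⌊((M*M*(2*q+1) : ℕ) : ℝ)/(k:ℝ)⌋ : ℝ) := by
        push_cast
        linarith [Int.sub_one_lt_floor (((M:ℝ)*(M:ℝ)*(2*(q:ℝ)+1))/(k:ℝ))]
      have hM2 := M_ineq δ (Real.sqrt C) hδ0 hδ1 hsC q k M hk hM hMgt
      have hchain : (2*(q:ℝ)+1) * (((q:ℝ)+1)*(SF.card:ℝ) + 1)
          ≤ (2*(q:ℝ)+1) * ((WF.card : ℝ) + SF.card) := by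
        calc (2*(q:ℝ)+1) * (((q:ℝ)+1)*(SF.card:ℝ) + 1)
            ≤ (2*(q:ℝ)+1) * (((q:ℝ)+1)*(6*Real.sqrt C*M + 4) + 1) := by
              apply mul_le_mul_of_nonneg_left _ (by positivity)
              have : ((q:ℝ)+1)*(SF.card:ℝ) ≤ ((q:ℝ)+1)*(6*Real.sqrt C*M + 4) :=
                mul_le_mul_of_nonneg_left hS (by positivity)
              linarith only [this]
          _ ≤ (1-δ) * ((2*(q:ℝ)+1)*((M:ℝ)*M)/k - 1) := hM2
          _ = (1-δ) * (((M:ℝ)*M*(2*(q:ℝ)+1))/k - 1) := by ring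
          _ ≤ (1-δ) * (⌊((M*M*(2*q+1) : ℕ) : ℝ)/(k:ℝ)⌋ : ℝ) :=
              mul_le_mul_of_nonneg_left hfloor (le_of_lt h1δ)
          _ ≤ (((A ∪ B) ∩ D i).ncard : ℝ) := hlow
          _ = _ := hcnt
          _ ≤ _ := key2
      have hWge : (q:ℝ)*(SF.card:ℝ) + 1 ≤ (WF.card : ℝ) := by
        have h := le_of_mul_le_mul_left hchain (by positivity : (0:ℝ) < 2*(q:ℝ)+1)
        linarith only [h]
      have hab : ((B ∩ D i).ncard : ℝ) + 1 ≤ ((A ∩ D i).ncard : ℝ) := by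
        have e1 : ((A ∩ D i).ncard : ℝ) = ∑ s : Fin M × Fin M, (nA q M (D i) s : ℝ) := by
          rw [hA, countA hM (D i)]; push_cast; ring
        have e2 : ((B ∩ D i).ncard : ℝ) = ∑ s : Fin M × Fin M, (nB q M (D i) s : ℝ) := by
          rw [hB, countB hM (D i)]; push_cast; ring
        rw [e1, e2]
        linarith only [key1, hWge]
      exact_mod_cast (by linarith only [hab] : ((B ∩ D i).ncard : ℝ) < ((A ∩ D i).ncard : ℝ))
    refine ⟨sweep, ?_⟩
    -- efficiency gap
    have hsumA : ∑ i : Fin k, ((A ∩ D i).ncard : ℝ) = (M:ℝ)*M*((q:ℝ)+1) := by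
      have h1 : ∀ i ∈ (Finset.univ : Finset (Fin k)),
          ((A ∩ D i).ncard : ℝ) = ∑ s : Fin M × Fin M, (nA q M (D i) s : ℝ) := by
        intro i _
        rw [hA, countA hM (D i)]; push_cast; ring
      rw [Finset.sum_congr rfl h1, Finset.sum_comm]
      have h2 : ∀ s ∈ (Finset.univ : Finset (Fin M × Fin M)),
          (∑ i : Fin k, (nA q M (D i) s : ℝ)) = ((q:ℝ)+1) := by
        intro s _
        have := sum_nA_districts (q := q) hM hdisjD hcover s
        calc (∑ i : Fin k, (nA q M (D i) s : ℝ)) = ((∑ i : Fin k, nA q M (D i) s : ℕ) : ℝ) := by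
              push_cast; ring
          _ = ((q:ℝ)+1) := by rw [this]; push_cast; ring
      rw [Finset.sum_congr rfl h2, Finset.sum_const, Finset.card_univ]
      simp only [Fintype.card_prod, Fintype.card_fin, nsmul_eq_mul]
      push_cast
      ring
    have hsumB : ∑ i : Fin k, ((B ∩ D i).ncard : ℝ) = (M:ℝ)*M*(q:ℝ) := by
      have h1 : ∀ i ∈ (Finset.univ : Finset (Fin k)),
          ((B ∩ D i).ncard : ℝ) = ∑ s : Fin M × Fin M, (nB q M (D i) s : ℝ) := by
        intro i _
        rw [hB, countB hM (D i)]; push_cast; ring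
      rw [Finset.sum_congr rfl h1, Finset.sum_comm]
      have h2 : ∀ s ∈ (Finset.univ : Finset (Fin M × Fin M)),
          (∑ i : Fin k, (nB q M (D i) s : ℝ)) = (q:ℝ) := by
        intro s _
        have := sum_nB_districts (q := q) hM hdisjD hcover s
        calc (∑ i : Fin k, (nB q M (D i) s : ℝ)) = ((∑ i : Fin k, nB q M (D i) s : ℕ) : ℝ) := by
              push_cast; ring
          _ = (q:ℝ) := by rw [this]
      rw [Finset.sum_congr rfl h2, Finset.sum_const, Finset.card_univ]
      simp only [Fintype.card_prod, Fintype.card_fin, nsmul_eq_mul]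
      push_cast
      ring
    have hwd : ∀ i ∈ (Finset.univ : Finset (Fin k)),
        wasteDiff A B (D i) ≤ ((A ∩ D i).ncard : ℝ)/2 - 3*((B ∩ D i).ncard : ℝ)/2 := by
      intro i _
      unfold wasteDiff
      rw [if_pos (sweep i)]
      have hceil := Int.le_ceil ((((A ∩ D i).ncard : ℝ) + ((B ∩ D i).ncard : ℝ)) / 2)
      linarith only [hceil]
    have hsum := Finset.sum_le_sum hwd
    have hsplit : ∑ i : Fin k, (((A ∩ D i).ncard : ℝ)/2 - 3*((B ∩ D i).ncard : ℝ)/2)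
        = (∑ i : Fin k, ((A ∩ D i).ncard : ℝ))/2 - 3*(∑ i : Fin k, ((B ∩ D i).ncard : ℝ))/2 := by
      simp only [Finset.sum_sub_distrib, Finset.sum_div, Finset.mul_sum]
    unfold effGap
    have hn : (0:ℝ) < ((A ∪ B).ncard : ℝ) := by
      rw [hcardU]; push_cast; positivity
    rw [div_le_iff₀ hn]
    rw [hcardU]
    push_cast
    rw [hsplit] at hsum
    rw [hsumA, hsumB] at hsum
    have hprod : 1*((M:ℝ)*M) ≤ (α*(2*(q:ℝ)+1))*((M:ℝ)*M) :=
      mul_le_mul_of_nonneg_right (le_of_lt hαq) (by positivity)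
    linarith only [hsum, hprod]


end
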